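/- Let P be a probability measure on ℝ≥0 × ℝ≥0 with coordinates (g0, g1) such that ∫ g0 dP = 1, ∫ g1 dP = 1, and P({g1 > 0}) > 0. Let R_1, …, R_L be pairwise disjoint measurable sets covering P-almost all of ℝ≥0 × ℝ≥0, let λ, μ ≥ 0, and let p_1, …, p_L > 0 satisfy ∫_{R_j} g1/(1 + g1·p_j) dP = ∫_{R_j} (λ + μ·g0) dP for every j = 1, …, L. Then λ + μ < 1. -/

import Mathlib

open MeasureTheory Real
open scoped NNReal

/-- If all `L` quantized power levels are strictly positive and each satisfies the
centroid optimality equation on its region, then `λ + μ < 1` (contrapositive: if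
`λ + μ ≥ 1`, the smallest power level must be zero). Here `g0, g1` have unit mean
and `g1 > 0` with positive probability. -/
theorem all_positive_powers_imp_lam_add_mu_lt_one
    (P : Measure (ℝ≥0 × ℝ≥0)) [IsProbabilityMeasure P]
    (hg0mean : ∫ x, (x.1 : ℝ) ∂P = 1)
    (hg1mean : ∫ x, (x.2 : ℝ) ∂P = 1)
    (hg1pos : 0 < P {x : ℝ≥0 × ℝ≥0 | 0 < x.2})
    (L : ℕ) (hL : 1 ≤ L)
    (R : Fin L → Set (ℝ≥0 × ℝ≥0))
    (hmeas : ∀ j, MeasurableSet (R j))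
    (hdisj : Pairwise (Function.onFun Disjoint R))
    (hcover : P (⋃ j, R j) = 1)
    (lam mu : ℝ) (hlam : 0 ≤ lam) (hmu : 0 ≤ mu)
    (p : Fin L → ℝ) (hp : ∀ j, 0 < p j)
    (heq : ∀ j, ∫ x in R j, (x.2 : ℝ) / (1 + (x.2 : ℝ) * p j) ∂P =
      ∫ x in R j, (lam + mu * (x.1 : ℝ)) ∂P) :
    lam + mu < 1 := by
  classical
  set φ : Fin L → (ℝ≥0 × ℝ≥0) → ℝ := fun j x => (x.2 : ℝ) / (1 + (x.2 : ℝ) * p j) with hφdef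
  have hg0int : Integrable (fun x : ℝ≥0 × ℝ≥0 => (x.1 : ℝ)) P := by
    by_contra h; rw [integral_undef h] at hg0mean; norm_num at hg0mean
  have hg1int : Integrable (fun x : ℝ≥0 × ℝ≥0 => (x.2 : ℝ)) P := by
    by_contra h; rw [integral_undef h] at hg1mean; norm_num at hg1mean
  have hden : ∀ (j : Fin L) (x : ℝ≥0 × ℝ≥0), 0 < 1 + (x.2 : ℝ) * p j := by
    intro j x
    have h1 : (0:ℝ) ≤ (x.2:ℝ) := x.2.coe_nonneg
    have h2 := (hp j).le
    positivity
  have hφnonneg : ∀ j x, 0 ≤ φ j x := fun j x =>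
    div_nonneg x.2.coe_nonneg (hden j x).le
  have hφle : ∀ j x, φ j x ≤ (x.2 : ℝ) := fun j x =>
    div_le_self x.2.coe_nonneg
      (le_add_of_nonneg_right (mul_nonneg x.2.coe_nonneg (hp j).le))
  have hφmeas : ∀ j, Measurable (φ j) := by
    intro j
    apply Measurable.div
    · exact measurable_snd.subtype_coe
    · exact (measurable_const.add (measurable_snd.subtype_coe.mul measurable_const))
  have hφint : ∀ j, IntegrableOn (φ j) (R j) P := by
    intro j
    refine (hg1int.integrableOn).mono' ((hφmeas j).aestronglyMeasurable) ?_
    filter_upwards with x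
    rw [Real.norm_eq_abs, abs_of_nonneg (hφnonneg j x)]
    exact hφle j x
  have hUmeas : MeasurableSet (⋃ j, R j) := MeasurableSet.iUnion hmeas
  have hUcompl : P (⋃ j, R j)ᶜ = 0 := by
    have := measure_compl hUmeas (measure_ne_top P _)
    rw [hcover, measure_univ] at this
    simpa using this
  have hUae : (⋃ j, R j) =ᵐ[P] Set.univ := by
    rw [MeasureTheory.ae_eq_univ]; exact hUcompl
  have hsum_g1 : ∑ j, ∫ x in R j, (x.2 : ℝ) ∂P = 1 := by
    rw [← tsum_fintype (L := .unconditional _), ← integral_iUnion hmeas hdisj hg1int.integrableOn]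
    calc ∫ x in ⋃ j, R j, (x.2 : ℝ) ∂P = ∫ x in Set.univ, (x.2 : ℝ) ∂P :=
          setIntegral_congr_set hUae
      _ = 1 := by rw [setIntegral_univ, hg1mean]
  have hintg0 : Integrable (fun x : ℝ≥0 × ℝ≥0 => lam + mu * (x.1 : ℝ)) P :=
    (integrable_const lam).add (hg0int.const_mul mu)
  have hsum_rhs : ∑ j, ∫ x in R j, (lam + mu * (x.1 : ℝ)) ∂P = lam + mu := by
    rw [← tsum_fintype (L := .unconditional _), ← integral_iUnion hmeas hdisj hintg0.integrableOn]
    calc ∫ x in ⋃ j, R j, (lam + mu * (x.1 : ℝ)) ∂P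
        = ∫ x in Set.univ, (lam + mu * (x.1 : ℝ)) ∂P := setIntegral_congr_set hUae
      _ = lam + mu := by
          rw [setIntegral_univ, integral_add (integrable_const _) (hg0int.const_mul mu),
            integral_const, probReal_univ, MeasureTheory.integral_const_mul, hg0mean]
          simp
  have hSmeas : MeasurableSet {x : ℝ≥0 × ℝ≥0 | 0 < x.2} :=
    measurableSet_lt measurable_const measurable_snd
  obtain ⟨j0, hj0⟩ : ∃ j, 0 < P ({x : ℝ≥0 × ℝ≥0 | 0 < x.2} ∩ R j) := by
    by_contra h
    push_neg at h
    have h0 : ∀ j, P ({x : ℝ≥0 × ℝ≥0 | 0 < x.2} ∩ R j) = 0 := fun j =>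
      le_antisymm (h j) (zero_le)
    have hz : P ({x : ℝ≥0 × ℝ≥0 | 0 < x.2} ∩ ⋃ j, R j) = 0 := by
      rw [Set.inter_iUnion]
      exact measure_iUnion_null h0
    have : P {x : ℝ≥0 × ℝ≥0 | 0 < x.2} = 0 := by
      have hle := measure_union_le (μ := P) ({x : ℝ≥0 × ℝ≥0 | 0 < x.2} ∩ ⋃ j, R j) (⋃ j, R j)ᶜ
      rw [hz, hUcompl, add_zero] at hle
      refine le_antisymm (le_trans (measure_mono ?_) hle) (zero_le)
      intro x hx
      by_cases hxU : x ∈ ⋃ j, R j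
      · exact Or.inl ⟨hx, hxU⟩
      · exact Or.inr hxU
    rw [this] at hg1pos
    exact lt_irrefl _ hg1pos
  have hstrict : ∫ x in R j0, φ j0 x ∂P < ∫ x in R j0, (x.2 : ℝ) ∂P := by
    have hdiffint : Integrable (fun x => (x.2 : ℝ) - φ j0 x) (P.restrict (R j0)) :=
      hg1int.integrableOn.sub (hφint j0)
    have hdiffnn : 0 ≤ fun x : ℝ≥0 × ℝ≥0 => (x.2 : ℝ) - φ j0 x := fun x =>
      sub_nonneg.mpr (hφle j0 x)
    have hpos : 0 < ∫ x in R j0, ((x.2 : ℝ) - φ j0 x) ∂P := by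
      rw [integral_pos_iff_support_of_nonneg hdiffnn hdiffint]
      have hsub : {x : ℝ≥0 × ℝ≥0 | 0 < x.2} ⊆
          Function.support fun x : ℝ≥0 × ℝ≥0 => (x.2 : ℝ) - φ j0 x := by
        intro x hx
        have hx2 : (0:ℝ) < (x.2 : ℝ) := hx
        have hlt : φ j0 x < (x.2 : ℝ) := by
          apply div_lt_self hx2
          have : 0 < (x.2 : ℝ) * p j0 := mul_pos hx2 (hp j0)
          linarith
        exact ne_of_gt (sub_pos.mpr hlt)
      calc (0:ENNReal) < P ({x : ℝ≥0 × ℝ≥0 | 0 < x.2} ∩ R j0) := hj0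
        _ = P.restrict (R j0) {x : ℝ≥0 × ℝ≥0 | 0 < x.2} :=
            (Measure.restrict_apply hSmeas).symm
        _ ≤ P.restrict (R j0) (Function.support fun x => (x.2 : ℝ) - φ j0 x) :=
            measure_mono hsub
    have := integral_sub hg1int.integrableOn (hφint j0)
    rw [this] at hpos
    linarith
  calc lam + mu = ∑ j, ∫ x in R j, (lam + mu * (x.1 : ℝ)) ∂P := hsum_rhs.symm
    _ = ∑ j, ∫ x in R j, φ j x ∂P := by
        refine Finset.sum_congr rfl fun j _ => ?_
        exact (heq j).symm
    _ < ∑ j, ∫ x in R j, (x.2 : ℝ) ∂P := by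
        refine Finset.sum_lt_sum (fun j _ => ?_) ⟨j0, Finset.mem_univ _, hstrict⟩
        exact integral_mono (hφint j) hg1int.integrableOn (fun x => hφle j x)
    _ = 1 := hsum_g1
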